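/- An integer t that can be written as t = 3x² − y² with integers x, y is a sum of two squares if and only if t = 2(m² − mn + n²) for some integers m, n. -/

import Mathlib

lemma st13_isSquare_neg3 {p : ℕ} (hp : p.Prime) (h1 : p % 3 = 1) :
    IsSquare (-3 : ZMod p) := by
  haveI : Fact p.Prime := ⟨hp⟩
  have hcard : (3 : ℕ) ∣ Fintype.card (ZMod p)ˣ := by
    rw [ZMod.card_units p]
    have := hp.two_le; omega
  obtain ⟨u, hu⟩ := exists_prime_orderOf_dvd_card 3 hcard
  set ω : ZMod p := (u : ZMod p) with hω
  have hu3 : u ^ 3 = 1 := by rw [← hu]; exact pow_orderOf_eq_one u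
  have hω3 : ω ^ 3 = 1 := by
    have := congrArg (Units.val) hu3
    push_cast at this; exact this
  have hune : u ≠ 1 := by
    intro h; rw [h, orderOf_one] at hu; omega
  have hωne : ω ≠ 1 := fun h => hune (Units.ext h)
  have hsum : ω ^ 2 + ω + 1 = 0 := by
    have hfac : (ω - 1) * (ω ^ 2 + ω + 1) = 0 := by
      linear_combination hω3
    rcases mul_eq_zero.mp hfac with h | h
    · exact absurd (sub_eq_zero.mp h) hωne
    · exact h
  exact ⟨2 * ω + 1, by linear_combination -4 * hsum⟩

lemma st13_mod3_of_isSquare_neg3 {p : ℕ} (hp : p.Prime) (h2 : p ≠ 2) (h3 : p ≠ 3)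
    (h : IsSquare (-3 : ZMod p)) : p % 3 = 1 := by
  haveI : Fact p.Prime := ⟨hp⟩
  obtain ⟨s, hs⟩ := h
  have h2' : (2 : ZMod p) ≠ 0 := by
    intro hh
    rw [show (2 : ZMod p) = ((2 : ℕ) : ZMod p) by push_cast; ring,
      ZMod.natCast_eq_zero_iff] at hh
    exact h2 ((Nat.prime_dvd_prime_iff_eq hp Nat.prime_two).mp hh)
  have h3' : (3 : ZMod p) ≠ 0 := by
    intro hh
    rw [show (3 : ZMod p) = ((3 : ℕ) : ZMod p) by push_cast; ring,
      ZMod.natCast_eq_zero_iff] at hh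
    exact h3 ((Nat.prime_dvd_prime_iff_eq hp Nat.prime_three).mp hh)
  set ω : ZMod p := (s - 1) * (2 : ZMod p)⁻¹ with hω
  have key : 2 * ω = s - 1 := by
    rw [hω]; field_simp
  have h4' : (4 : ZMod p) ≠ 0 := by
    intro hh
    exact h2' (mul_self_eq_zero.mp (by linear_combination hh))
  have hsum : ω ^ 2 + ω + 1 = 0 := by
    have h0 : (4 : ZMod p) * (ω ^ 2 + ω + 1) = 0 := by
      linear_combination (2 * ω + s + 1) * key - hs
    rcases mul_eq_zero.mp h0 with h | h
    · exact absurd h h4'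
    · exact h
  have hω3 : ω ^ 3 = 1 := by linear_combination (ω - 1) * hsum
  have hωne : ω ≠ 1 := by
    intro h; rw [h] at hsum
    exact h3' (by linear_combination hsum)
  let u : (ZMod p)ˣ := Units.mkOfMulEqOne ω (ω ^ 2) (by linear_combination hω3)
  have huv : (u : ZMod p) = ω := rfl
  have hu3 : u ^ 3 = 1 := by
    ext; push_cast [huv]; exact hω3
  have hord : orderOf u = 3 := orderOf_eq_prime hu3 (by
    intro h; exact hωne (by rw [← huv, h]; rfl))
  have hdvd : (3 : ℕ) ∣ p - 1 := by
    rw [← ZMod.card_units p, ← hord]; exact orderOf_dvd_card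
  have := hp.two_le
  omega

lemma st13_not_isSquare_neg3 {p : ℕ} (hp : p.Prime) (hne2 : p ≠ 2) (h2 : p % 3 = 2) :
    ¬ IsSquare (-3 : ZMod p) := by
  intro h
  have hne3 : p ≠ 3 := by intro h'; subst h'; norm_num at h2
  have := st13_mod3_of_isSquare_neg3 hp hne2 hne3 h
  omega

lemma st13_not_isSquare_3_of_5 {p : ℕ} (hp : p.Prime) (h5 : p % 12 = 5) :
    ¬ IsSquare (3 : ZMod p) := by
  haveI : Fact p.Prime := ⟨hp⟩
  rintro ⟨s, hs⟩
  have h4 : p % 4 ≠ 3 := by omega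
  obtain ⟨r, hr⟩ := ZMod.exists_sq_eq_neg_one_iff.mpr h4
  have : IsSquare (-3 : ZMod p) := ⟨r * s, by linear_combination (s * s) * hr - hs⟩
  exact st13_not_isSquare_neg3 hp (by omega) (by omega) this

lemma st13_not_isSquare_3_of_7 {p : ℕ} (hp : p.Prime) (h7 : p % 12 = 7) :
    ¬ IsSquare (3 : ZMod p) := by
  haveI : Fact p.Prime := ⟨hp⟩
  rintro ⟨s, hs⟩
  obtain ⟨r, hr⟩ := st13_isSquare_neg3 hp (by omega)
  have hs0 : s ≠ 0 := by
    intro h; rw [h, mul_zero] at hs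
    have h3' : (3 : ZMod p) ≠ 0 := by
      intro hh
      rw [show (3 : ZMod p) = ((3 : ℕ) : ZMod p) by push_cast; ring,
        ZMod.natCast_eq_zero_iff] at hh
      have := (Nat.prime_dvd_prime_iff_eq hp Nat.prime_three).mp hh
      omega
    exact h3' hs
  have hneg1 : IsSquare (-1 : ZMod p) := by
    refine ⟨r * s⁻¹, ?_⟩
    have hss : s * s⁻¹ = 1 := mul_inv_cancel₀ hs0
    linear_combination (s⁻¹ * s⁻¹) * hr + (s⁻¹ * s⁻¹) * hs + (s * s⁻¹ + 1) * hss
  have := ZMod.exists_sq_eq_neg_one_iff.mp hneg1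
  omega

/-- generic: if whenever `p ∣ n` (with property `P`) we can divide by `p^2` keeping `P`,
then the `p`-adic valuation is even. -/
lemma st13_even_val {p : ℕ} (hp : p.Prime) (P : ℕ → Prop)
    (step : ∀ n : ℕ, n ≠ 0 → P n → p ∣ n → ∃ m, n = p ^ 2 * m ∧ P m) :
    ∀ n : ℕ, n ≠ 0 → P n → Even (padicValNat p n) := by
  haveI : Fact p.Prime := ⟨hp⟩
  intro n
  induction n using Nat.strong_induction_on with
  | _ n ih =>
    intro hn hP
    by_cases hdvd : p ∣ n
    · obtain ⟨m, rfl, hPm⟩ := step n hn hP hdvd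
      have hm : m ≠ 0 := by rintro rfl; simp at hn
      have hp2 : p ^ 2 ≠ 0 := (pow_pos hp.pos 2).ne'
      have hlt : m < p ^ 2 * m := by
        have h1 : 1 < p ^ 2 := by nlinarith [hp.two_le]
        calc m = 1 * m := (one_mul m).symm
        _ < p ^ 2 * m := by
          exact Nat.mul_lt_mul_of_lt_of_le h1 le_rfl (Nat.pos_of_ne_zero hm)
      obtain ⟨k, hk⟩ := ih m hlt hm hPm
      rw [padicValNat.mul hp2 hm, padicValNat.prime_pow]
      exact ⟨k + 1, by omega⟩
    · rw [padicValNat.eq_zero_of_not_dvd hdvd]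
      exact Even.zero

/-- Step lemma for the form 3x² - y², for primes where 3 is a non-residue. -/
lemma st13_stepA {q : ℕ} (hq : q.Prime) (h3 : ¬ IsSquare (3 : ZMod q)) :
    ∀ n : ℕ, n ≠ 0 → (∃ x y : ℤ, (n : ℤ) = 3 * x ^ 2 - y ^ 2) → q ∣ n →
      ∃ m, n = q ^ 2 * m ∧ ∃ x y : ℤ, (m : ℤ) = 3 * x ^ 2 - y ^ 2 := by
  haveI : Fact q.Prime := ⟨hq⟩
  intro n hn ⟨x, y, hxy⟩ hdvd
  have h30 : (3 : ZMod q) ≠ 0 := fun hh => h3 ⟨0, by rw [hh]; ring⟩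
  have hn0 : ((n : ℕ) : ZMod q) = 0 := (ZMod.natCast_eq_zero_iff n q).mpr hdvd
  have hcast : 3 * (x : ZMod q) ^ 2 - (y : ZMod q) ^ 2 = 0 := by
    have := congrArg (fun z : ℤ => (z : ZMod q)) hxy
    push_cast at this
    rw [hn0] at this
    linear_combination -this
  -- show (x : ZMod q) = 0
  have hX : (x : ZMod q) = 0 := by
    by_contra hX
    apply h3
    refine ⟨(y : ZMod q) * ((x : ZMod q))⁻¹, ?_⟩
    have hinv : (x : ZMod q) * ((x : ZMod q))⁻¹ = 1 := mul_inv_cancel₀ hX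
    linear_combination ((x:ZMod q))⁻¹ * ((x:ZMod q))⁻¹ * hcast -
      3 * ((x : ZMod q) * ((x:ZMod q))⁻¹ + 1) * hinv
  have hY : (y : ZMod q) = 0 := by
    rw [hX] at hcast
    have : (y : ZMod q) ^ 2 = 0 := by linear_combination -hcast
    exact pow_eq_zero_iff (by norm_num) |>.mp this
  obtain ⟨x1, rfl⟩ := (ZMod.intCast_zmod_eq_zero_iff_dvd x q).mp hX
  obtain ⟨y1, rfl⟩ := (ZMod.intCast_zmod_eq_zero_iff_dvd y q).mp hY
  have key : (n : ℤ) = (q : ℤ) ^ 2 * (3 * x1 ^ 2 - y1 ^ 2) := by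
    rw [hxy]; ring
  have hdvd2 : (q ^ 2 : ℕ) ∣ n := by
    have : ((q ^ 2 : ℕ) : ℤ) ∣ (n : ℤ) := ⟨_, by push_cast; exact key⟩
    exact_mod_cast this
  obtain ⟨m, rfl⟩ := hdvd2
  refine ⟨m, rfl, x1, y1, ?_⟩
  have hq2 : ((q : ℤ)) ^ 2 ≠ 0 := pow_ne_zero 2 (by exact_mod_cast hq.pos.ne')
  have : ((q ^ 2 * m : ℕ) : ℤ) = (q : ℤ) ^ 2 * (m : ℤ) := by push_cast; ring
  rw [this] at key
  exact mul_left_cancel₀ hq2 key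

/-- Step lemma for the form a² + ab + b², for primes where -3 is a non-residue. -/
lemma st13_stepB {q : ℕ} (hq : q.Prime) (h3 : ¬ IsSquare (-3 : ZMod q)) :
    ∀ n : ℕ, n ≠ 0 → (∃ a b : ℤ, (n : ℤ) = a ^ 2 + a * b + b ^ 2) → q ∣ n →
      ∃ m, n = q ^ 2 * m ∧ ∃ a b : ℤ, (m : ℤ) = a ^ 2 + a * b + b ^ 2 := by
  haveI : Fact q.Prime := ⟨hq⟩
  intro n hn ⟨a, b, hab⟩ hdvd
  have hn0 : ((n : ℕ) : ZMod q) = 0 := (ZMod.natCast_eq_zero_iff n q).mpr hdvd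
  have hcast : (a : ZMod q) ^ 2 + (a : ZMod q) * (b : ZMod q) + (b : ZMod q) ^ 2 = 0 := by
    have := congrArg (fun z : ℤ => (z : ZMod q)) hab
    push_cast at this
    rw [hn0] at this
    linear_combination -this
  have hB : (b : ZMod q) = 0 := by
    by_contra hB
    apply h3
    refine ⟨(2 * (a : ZMod q) + (b : ZMod q)) * ((b : ZMod q))⁻¹, ?_⟩
    have hinv : (b : ZMod q) * ((b : ZMod q))⁻¹ = 1 := mul_inv_cancel₀ hB
    linear_combination (-4 * (((b:ZMod q))⁻¹ * ((b:ZMod q))⁻¹)) * hcast +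
      3 * ((b : ZMod q) * ((b:ZMod q))⁻¹ + 1) * hinv
  have hA : (a : ZMod q) = 0 := by
    rw [hB] at hcast
    have : (a : ZMod q) ^ 2 = 0 := by linear_combination hcast
    exact pow_eq_zero_iff (by norm_num) |>.mp this
  obtain ⟨a1, rfl⟩ := (ZMod.intCast_zmod_eq_zero_iff_dvd a q).mp hA
  obtain ⟨b1, rfl⟩ := (ZMod.intCast_zmod_eq_zero_iff_dvd b q).mp hB
  have key : (n : ℤ) = (q : ℤ) ^ 2 * (a1 ^ 2 + a1 * b1 + b1 ^ 2) := by
    rw [hab]; ring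
  have hdvd2 : (q ^ 2 : ℕ) ∣ n := by
    have : ((q ^ 2 : ℕ) : ℤ) ∣ (n : ℤ) := ⟨_, by push_cast; exact key⟩
    exact_mod_cast this
  obtain ⟨m, rfl⟩ := hdvd2
  refine ⟨m, rfl, a1, b1, ?_⟩
  have hq2 : ((q : ℤ)) ^ 2 ≠ 0 := pow_ne_zero 2 (by exact_mod_cast hq.pos.ne')
  have : ((q ^ 2 * m : ℕ) : ℤ) = (q : ℤ) ^ 2 * (m : ℤ) := by push_cast; ring
  rw [this] at key
  exact mul_left_cancel₀ hq2 key

lemma st13_even_int_of_zmod4 {u : ℤ} (h : (u : ZMod 4) = 0 ∨ (u : ZMod 4) = 2) : 2 ∣ u := by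
  rcases h with h | h
  · have := (ZMod.intCast_zmod_eq_zero_iff_dvd u 4).mp h
    exact dvd_trans (by norm_num) this
  · have h2 : ((u - 2 : ℤ) : ZMod 4) = 0 := by push_cast; rw [h]; ring
    obtain ⟨c, hc⟩ := (ZMod.intCast_zmod_eq_zero_iff_dvd (u - 2) 4).mp h2
    exact ⟨2 * c + 1, by omega⟩

lemma st13_odd_val2 :
    ∀ n : ℕ, n ≠ 0 → (∃ u v : ℤ, (n : ℤ) = u ^ 2 + v ^ 2) →
      (∃ x y : ℤ, (n : ℤ) = 3 * x ^ 2 - y ^ 2) → Odd (padicValNat 2 n) := by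
  intro n
  induction n using Nat.strong_induction_on with
  | _ n ih =>
    rintro hn ⟨u, v, huv⟩ ⟨x, y, hxy⟩
    have huv4 : ((n : ℕ) : ZMod 4) = (u : ZMod 4) ^ 2 + (v : ZMod 4) ^ 2 := by
      have := congrArg (fun z : ℤ => (z : ZMod 4)) huv
      push_cast at this; exact this
    have hxy4 : ((n : ℕ) : ZMod 4) = 3 * (x : ZMod 4) ^ 2 - (y : ZMod 4) ^ 2 := by
      have := congrArg (fun z : ℤ => (z : ZMod 4)) hxy
      push_cast at this; exact this
    have dec1 : ∀ A B X Y : ZMod 4, A ^ 2 + B ^ 2 = 3 * X ^ 2 - Y ^ 2 →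
        A ^ 2 + B ^ 2 = 0 ∨ A ^ 2 + B ^ 2 = 2 := by decide
    rcases dec1 _ _ _ _ (huv4 ▸ hxy4) with h0 | h2
    · -- n ≡ 0 mod 4
      have hnz : ((n : ℕ) : ZMod 4) = 0 := huv4.trans h0
      have hn4 : (4 : ℕ) ∣ n := (ZMod.natCast_eq_zero_iff n 4).mp hnz
      have dec2 : ∀ A B : ZMod 4, A ^ 2 + B ^ 2 = 0 →
          (A = 0 ∨ A = 2) ∧ (B = 0 ∨ B = 2) := by decide
      have dec3 : ∀ X Y : ZMod 4, 3 * X ^ 2 - Y ^ 2 = 0 →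
          (X = 0 ∨ X = 2) ∧ (Y = 0 ∨ Y = 2) := by decide
      have h2uv := dec2 _ _ h0
      have h2xy := dec3 _ _ (hxy4.symm.trans hnz)
      obtain ⟨u1, rfl⟩ := st13_even_int_of_zmod4 h2uv.1
      obtain ⟨v1, rfl⟩ := st13_even_int_of_zmod4 h2uv.2
      obtain ⟨x1, rfl⟩ := st13_even_int_of_zmod4 h2xy.1
      obtain ⟨y1, rfl⟩ := st13_even_int_of_zmod4 h2xy.2
      obtain ⟨m, rfl⟩ := hn4
      have hm : m ≠ 0 := by rintro rfl; simp at hn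
      have hcast : ((4 * m : ℕ) : ℤ) = 4 * (m : ℤ) := by push_cast; ring
      have e1 : (m : ℤ) = u1 ^ 2 + v1 ^ 2 := by
        have : (4 : ℤ) * (m : ℤ) = 4 * (u1 ^ 2 + v1 ^ 2) := by
          rw [← hcast, huv]; ring
        linarith
      have e2 : (m : ℤ) = 3 * x1 ^ 2 - y1 ^ 2 := by
        have : (4 : ℤ) * (m : ℤ) = 4 * (3 * x1 ^ 2 - y1 ^ 2) := by
          rw [← hcast, hxy]; ring
        linarith
      have hlt : m < 4 * m := by omega
      obtain ⟨k, hk⟩ := ih m hlt hm ⟨u1, v1, e1⟩ ⟨x1, y1, e2⟩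
      haveI : Fact (Nat.Prime 2) := ⟨Nat.prime_two⟩
      rw [padicValNat.mul (by norm_num) hm, show (4 : ℕ) = 2 ^ 2 by norm_num,
        padicValNat.prime_pow]
      exact ⟨k + 1, by omega⟩
    · -- n ≡ 2 mod 4
      have hmod : n % 4 = 2 := by
        have := congrArg ZMod.val (huv4 ▸ h2).symm
        rw [ZMod.val_natCast, show ZMod.val (2 : ZMod 4) = 2 from rfl] at this
        omega
      obtain ⟨m, hm, hmo⟩ : ∃ m, n = 2 * m ∧ m % 2 = 1 := ⟨n / 2, by omega, by omega⟩
      subst hm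
      haveI : Fact (Nat.Prime 2) := ⟨Nat.prime_two⟩
      rw [padicValNat.mul (by norm_num) (by omega), padicValNat.self (by norm_num),
        padicValNat.eq_zero_of_not_dvd (by omega)]
      exact ⟨0, by norm_num⟩

lemma st13_step3 :
    ∀ n : ℕ, n ≠ 0 →
      ((∃ x y : ℤ, (n : ℤ) = 3 * x ^ 2 - y ^ 2) ∧
        (∃ a b : ℤ, (n : ℤ) = 2 * (a ^ 2 + a * b + b ^ 2))) → 3 ∣ n →
      ∃ m, n = 3 ^ 2 * m ∧
        ((∃ x y : ℤ, (m : ℤ) = 3 * x ^ 2 - y ^ 2) ∧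
          (∃ a b : ℤ, (m : ℤ) = 2 * (a ^ 2 + a * b + b ^ 2))) := by
  rintro n hn ⟨⟨x, y, hxy⟩, ⟨a, b, hab⟩⟩ hdvd
  have hnz : ((n : ℕ) : ZMod 3) = 0 := (ZMod.natCast_eq_zero_iff n 3).mpr hdvd
  have hxy3 : (3 : ZMod 3) * (x : ZMod 3) ^ 2 - (y : ZMod 3) ^ 2 = 0 := by
    have := congrArg (fun z : ℤ => (z : ZMod 3)) hxy
    push_cast at this
    rw [hnz] at this
    linear_combination -this
  have hab3 : (2 : ZMod 3) * ((a : ZMod 3) ^ 2 + (a : ZMod 3) * (b : ZMod 3) + (b : ZMod 3) ^ 2) = 0 := by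
    have := congrArg (fun z : ℤ => (z : ZMod 3)) hab
    push_cast at this
    rw [hnz] at this
    linear_combination -this
  have dec1 : ∀ X Y : ZMod 3, 3 * X ^ 2 - Y ^ 2 = 0 → Y = 0 := by decide
  have dec2 : ∀ A B : ZMod 3, 2 * (A ^ 2 + A * B + B ^ 2) = 0 → A - B = 0 := by decide
  have hY := dec1 _ _ hxy3
  have hAB := dec2 _ _ hab3
  obtain ⟨z, rfl⟩ := (ZMod.intCast_zmod_eq_zero_iff_dvd y 3).mp hY
  obtain ⟨j, hj⟩ : (3 : ℤ) ∣ a - b := by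
    apply (ZMod.intCast_zmod_eq_zero_iff_dvd (a - b) 3).mp
    push_cast
    exact hAB
  have ha : a = b + 3 * j := by linarith
  subst ha
  -- n = 3 * (x² - 3 z²)  and  n = 3 * (2 * (b² + 3jb + 3j²))
  have e1 : (n : ℤ) = 3 * (x ^ 2 - 3 * z ^ 2) := by rw [hxy]; ring
  have e2 : (n : ℤ) = 3 * (2 * (b ^ 2 + 3 * j * b + 3 * j ^ 2)) := by rw [hab]; ring
  have e3 : x ^ 2 - 3 * z ^ 2 = 2 * (b ^ 2 + 3 * j * b + 3 * j ^ 2) := by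
    have := e1.symm.trans e2
    linarith
  have e3' : (x : ZMod 3) ^ 2 - 3 * (z : ZMod 3) ^ 2 =
      2 * ((b : ZMod 3) ^ 2 + 3 * (j : ZMod 3) * (b : ZMod 3) + 3 * (j : ZMod 3) ^ 2) := by
    have := congrArg (fun w : ℤ => (w : ZMod 3)) e3
    push_cast at this
    exact this
  have dec3 : ∀ X Z B J : ZMod 3,
      X ^ 2 - 3 * Z ^ 2 = 2 * (B ^ 2 + 3 * J * B + 3 * J ^ 2) → X = 0 ∧ B = 0 := by decide
  obtain ⟨hX, hB⟩ := dec3 _ _ _ _ e3'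
  obtain ⟨w, rfl⟩ := (ZMod.intCast_zmod_eq_zero_iff_dvd x 3).mp hX
  obtain ⟨k, rfl⟩ := (ZMod.intCast_zmod_eq_zero_iff_dvd b 3).mp hB
  have key : (n : ℤ) = 9 * (3 * w ^ 2 - z ^ 2) := by rw [hxy]; ring
  have key2 : (n : ℤ) = 9 * (2 * ((j + k) ^ 2 + (j + k) * k + k ^ 2)) := by rw [hab]; ring
  have hdvd9 : (9 : ℕ) ∣ n := by
    have : ((9 : ℕ) : ℤ) ∣ (n : ℤ) := ⟨_, by push_cast; exact key⟩
    exact_mod_cast this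
  obtain ⟨m, rfl⟩ := hdvd9
  have hc : ((9 * m : ℕ) : ℤ) = 9 * (m : ℤ) := by push_cast; ring
  refine ⟨m, by norm_num, ⟨w, z, ?_⟩, ⟨j + k, k, ?_⟩⟩
  · have := hc.symm.trans key; linarith
  · have := hc.symm.trans key2; linarith

lemma st13_parity (a b : ℤ) (h : Even (a ^ 2 + 3 * b ^ 2)) :
    (Even a ∧ Even b) ∨ (Odd a ∧ Odd b) := by
  obtain ⟨e, he⟩ := h
  have hz : (a : ZMod 2) ^ 2 + 3 * (b : ZMod 2) ^ 2 = 0 := by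
    have := congrArg (fun z : ℤ => (z : ZMod 2)) he
    push_cast at this
    rw [this]
    have h2 : (2 : ZMod 2) = 0 := rfl
    linear_combination (e : ZMod 2) * h2
  have dec : ∀ A B : ZMod 2, A ^ 2 + 3 * B ^ 2 = 0 → (A = 0 ∧ B = 0) ∨ (A = 1 ∧ B = 1) := by
    decide
  rcases dec _ _ hz with ⟨hA, hB⟩ | ⟨hA, hB⟩
  · left
    obtain ⟨c, hc⟩ := (ZMod.intCast_zmod_eq_zero_iff_dvd a 2).mp hA
    obtain ⟨d, hd⟩ := (ZMod.intCast_zmod_eq_zero_iff_dvd b 2).mp hB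
    exact ⟨⟨c, by omega⟩, ⟨d, by omega⟩⟩
  · right
    have hA' : ((a - 1 : ℤ) : ZMod 2) = 0 := by push_cast; rw [hA]; ring
    have hB' : ((b - 1 : ℤ) : ZMod 2) = 0 := by push_cast; rw [hB]; ring
    obtain ⟨c, hc⟩ := (ZMod.intCast_zmod_eq_zero_iff_dvd (a - 1) 2).mp hA'
    obtain ⟨d, hd⟩ := (ZMod.intCast_zmod_eq_zero_iff_dvd (b - 1) 2).mp hB'
    exact ⟨⟨c, by omega⟩, ⟨d, by omega⟩⟩

lemma st13_small_residue (k a : ℤ) (hk1 : 1 ≤ k) (hodd : k % 2 = 1) :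
    ∃ r, (k ∣ a - r) ∧ 4 * r ^ 2 ≤ (k - 1) ^ 2 := by
  set r0 := a % k with hr0
  have h0 : 0 ≤ r0 := Int.emod_nonneg a (by omega)
  have hlt : r0 < k := Int.emod_lt_of_pos a (by omega)
  have hdvd : k ∣ a - r0 := ⟨a / k, by rw [hr0, Int.emod_def]; ring⟩
  by_cases h : 2 * r0 ≤ k - 1
  · exact ⟨r0, hdvd, by nlinarith⟩
  · refine ⟨r0 - k, ?_, ?_⟩
    · have : a - (r0 - k) = (a - r0) + k := by ring
      rw [this]; exact dvd_add hdvd dvd_rfl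
    · have h1 : 1 - k ≤ 2 * (r0 - k) := by omega
      have h2 : 2 * (r0 - k) ≤ -1 := by omega
      have := mul_nonneg (by omega : (0:ℤ) ≤ k - 1 - 2 * (r0 - k))
        (by omega : (0:ℤ) ≤ k - 1 + 2 * (r0 - k))
      nlinarith

lemma st13_reduce {p k : ℕ} (hp : p.Prime) (hodd : p % 2 = 1) (hk : 0 < k) (A B : ℤ)
    (h : (k : ℤ) * p = (2 * A) ^ 2 + 3 * (2 * B) ^ 2) :
    ∃ k2, k = 4 * k2 ∧ 0 < k2 ∧ (k2 : ℤ) * p = A ^ 2 + 3 * B ^ 2 := by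
  have hdvd4 : (4 : ℕ) ∣ k * p := by
    have h4 : ((4 : ℕ) : ℤ) ∣ ((k * p : ℕ) : ℤ) := ⟨A ^ 2 + 3 * B ^ 2, by push_cast; linarith⟩
    exact_mod_cast h4
  have hcop : Nat.Coprime 4 p := by
    have h2p : ¬ (2 ∣ p) := by omega
    have : Nat.Coprime 2 p := (Nat.prime_two.coprime_iff_not_dvd).mpr h2p
    exact (show (4:ℕ) = 2 ^ 2 by norm_num) ▸ Nat.Coprime.pow_left 2 this
  have h4k : (4 : ℕ) ∣ k := (Nat.Coprime.dvd_of_dvd_mul_right hcop) hdvd4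
  obtain ⟨k2, rfl⟩ := h4k
  refine ⟨k2, rfl, by omega, ?_⟩
  have : (4 : ℤ) * ((k2 : ℤ) * p) = 4 * (A ^ 2 + 3 * B ^ 2) := by push_cast at h ⊢; linarith
  linarith

lemma st13_descent {p : ℕ} (hp : p.Prime) (hodd : p % 2 = 1) :
    ∀ k : ℕ, 0 < k → k < p → (∃ a b : ℤ, ((k * p : ℕ) : ℤ) = a ^ 2 + 3 * b ^ 2) →
      ∃ a b : ℤ, (p : ℤ) = a ^ 2 + 3 * b ^ 2 := by
  intro k
  induction k using Nat.strong_induction_on with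
  | _ k ih =>
    rintro hk0 hkp ⟨a, b, hab⟩
    have hab' : (k : ℤ) * p = a ^ 2 + 3 * b ^ 2 := by push_cast at hab; linarith
    rcases eq_or_lt_of_le (Nat.one_le_iff_ne_zero.mpr hk0.ne') with h1 | hk1
    · -- k = 1
      refine ⟨a, b, ?_⟩
      rw [← h1] at hab'
      push_cast at hab' ⊢
      linarith
    · -- 1 < k
      rcases Nat.even_or_odd k with hke | hko
      · -- k even
        have hevstep : ∀ A B : ℤ, Even A → Even B → A ^ 2 + 3 * B ^ 2 = (k:ℤ) * p →
            ∃ a b : ℤ, (p : ℤ) = a ^ 2 + 3 * b ^ 2 := by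
          rintro A B ⟨A1, hA1⟩ ⟨B1, hB1⟩ hh
          obtain ⟨k2, hk2, hk2pos, hrep⟩ := st13_reduce hp hodd hk0 A1 B1
            (by rw [hA1, hB1] at hh; linear_combination -hh)
          exact ih k2 (by omega) hk2pos (by omega) ⟨A1, B1, by push_cast; linarith⟩
        have heven : Even (a ^ 2 + 3 * b ^ 2) := by
          rw [← hab']
          obtain ⟨k1, hk1'⟩ := hke
          exact ⟨(k1 : ℤ) * p, by push_cast [hk1']; ring⟩
        rcases st13_parity a b heven with ⟨ha, hb⟩ | ⟨ha, hb⟩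
        · exact hevstep a b ha hb hab'.symm
        · -- a, b both odd
          obtain ⟨α, hα⟩ := ha
          obtain ⟨β, hβ⟩ := hb
          subst hα; subst hβ
          have hkpe : Even ((k : ℤ) * p) := by rw [hab']; exact heven
          have he1 : (α + 3 * β + 2) ^ 2 + 3 * (α - β) ^ 2 = (k:ℤ) * p := by
            linear_combination -hab'
          rcases st13_parity _ _ (by rw [he1]; exact hkpe) with ⟨hc, hd⟩ | ⟨hc, hd⟩
          · exact hevstep _ _ hc hd he1
          · -- second transformed pair
            have he2 : (α - 3 * β - 1) ^ 2 + 3 * (α + β + 1) ^ 2 = (k:ℤ) * p := by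
              linear_combination -hab'
            rcases st13_parity _ _ (by rw [he2]; exact hkpe) with ⟨hc', hd'⟩ | ⟨hc', hd'⟩
            · exact hevstep _ _ hc' hd' he2
            · exfalso
              obtain ⟨e, he⟩ := hd
              obtain ⟨f, hf⟩ := hd'
              omega
      · -- k odd
        have hk1' : (1 : ℤ) ≤ k := by exact_mod_cast hk0
        have hkoz : (k : ℤ) % 2 = 1 := by
          obtain ⟨j, hj⟩ := hko
          omega
        obtain ⟨r, hr, hrb⟩ := st13_small_residue (k : ℤ) a hk1' hkoz
        obtain ⟨s, hs, hsb⟩ := st13_small_residue (k : ℤ) b hk1' hkoz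
        have hdvdsum : (k : ℤ) ∣ r ^ 2 + 3 * s ^ 2 := by
          have h1 : (k : ℤ) ∣ (r ^ 2 + 3 * s ^ 2) - (a ^ 2 + 3 * b ^ 2) := by
            have : (r ^ 2 + 3 * s ^ 2) - (a ^ 2 + 3 * b ^ 2) =
                (a - r) * (-(r + a)) + (b - s) * (-3 * (s + b)) := by ring
            rw [this]
            exact dvd_add (hr.mul_right _) (hs.mul_right _)
          have h2 : (k : ℤ) ∣ a ^ 2 + 3 * b ^ 2 := ⟨(p : ℤ), by linarith⟩
          have := dvd_add h1 h2
          simpa using this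
        obtain ⟨k', hk'⟩ := hdvdsum
        have hkpos : (0 : ℤ) < k := by exact_mod_cast hk0
        have hk'nonneg : 0 ≤ k' := by nlinarith [sq_nonneg r, sq_nonneg s]
        have hk'pos : 0 < k' := by
          rcases eq_or_lt_of_le hk'nonneg with h0 | h; swap; · exact h
          exfalso
          have hr0 : r = 0 ∧ s = 0 := by constructor <;> nlinarith [sq_nonneg r, sq_nonneg s]
          obtain ⟨hr0', hs0'⟩ := hr0
          rw [hr0'] at hr; rw [hs0'] at hs
          simp only [sub_zero] at hr hs
          obtain ⟨a1, ha1⟩ := hr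
          obtain ⟨b1, hb1⟩ := hs
          have : (k : ℤ) * p = (k:ℤ) ^ 2 * (a1 ^ 2 + 3 * b1 ^ 2) := by
            rw [hab', ha1, hb1]; ring
          have hpk : (p : ℤ) = (k : ℤ) * (a1 ^ 2 + 3 * b1 ^ 2) := by
            have hkne : (k : ℤ) ≠ 0 := by omega
            have this2 : (k : ℤ) * (p : ℤ) = (k : ℤ) * ((k : ℤ) * (a1 ^ 2 + 3 * b1 ^ 2)) := by
              linear_combination this
            exact mul_left_cancel₀ hkne this2
          have hkdvd : (k : ℕ) ∣ p := by
            have : ((k : ℕ) : ℤ) ∣ (p : ℤ) := ⟨_, hpk⟩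
            exact_mod_cast this
          rcases (Nat.Prime.eq_one_or_self_of_dvd hp k hkdvd) with h | h <;> omega
        have hk'lt : k' < k := by nlinarith
        -- composition
        have hU : (k : ℤ) ∣ r * a + 3 * s * b := by
          have h1 : (k : ℤ) ∣ (r * a + 3 * s * b) - (a ^ 2 + 3 * b ^ 2) := by
            have : (r * a + 3 * s * b) - (a ^ 2 + 3 * b ^ 2) =
                (a - r) * (-a) + (b - s) * (-3 * b) := by ring
            rw [this]
            exact dvd_add (hr.mul_right _) (hs.mul_right _)
          have h2 : (k : ℤ) ∣ a ^ 2 + 3 * b ^ 2 := ⟨(p : ℤ), by linarith⟩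
          have := dvd_add h1 h2
          simpa using this
        have hV : (k : ℤ) ∣ r * b - s * a := by
          have : r * b - s * a = (a - r) * (-b) + (b - s) * a := by ring
          rw [this]
          exact dvd_add (hr.mul_right _) (hs.mul_right _)
        obtain ⟨U, hUe⟩ := hU
        obtain ⟨V, hVe⟩ := hV
        have hcomp : (k:ℤ) ^ 2 * (k' * p) = (k:ℤ) ^ 2 * (U ^ 2 + 3 * V ^ 2) := by
          have expand : (r ^ 2 + 3 * s ^ 2) * (a ^ 2 + 3 * b ^ 2) =
              (r * a + 3 * s * b) ^ 2 + 3 * (r * b - s * a) ^ 2 := by ring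
          rw [hk', ← hab'] at expand
          rw [hUe, hVe] at expand
          linear_combination expand
        have hk2ne : ((k : ℤ)) ^ 2 ≠ 0 := pow_ne_zero 2 (by omega)
        have hrep : k' * (p : ℤ) = U ^ 2 + 3 * V ^ 2 := mul_left_cancel₀ hk2ne hcomp
        set k'' := k'.toNat with hk''
        have hk''e : (k'' : ℤ) = k' := Int.toNat_of_nonneg hk'nonneg
        have hk''lt : k'' < k := by omega
        have hk''pos : 0 < k'' := by omega
        exact ih k'' hk''lt hk''pos (by omega)
          ⟨U, V, by push_cast; rw [hk''e]; linarith⟩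

lemma st13_fermat {p : ℕ} (hp : p.Prime) (h1 : p % 3 = 1) :
    ∃ a b : ℤ, (p : ℤ) = a ^ 2 + a * b + b ^ 2 := by
  haveI : Fact p.Prime := ⟨hp⟩
  have hp7 : 7 ≤ p := by
    rcases Nat.lt_or_ge p 7 with h | h
    · interval_cases p <;> revert hp h1 <;> decide
    · exact h
  have hodd : p % 2 = 1 := by
    rcases hp.eq_two_or_odd with h | h
    · omega
    · exact h
  obtain ⟨s, hs⟩ := st13_isSquare_neg3 hp h1
  have hpltval : s.val < p := ZMod.val_lt s
  set c : ℕ := min s.val (p - s.val) with hc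
  have h2c : 2 * c + 1 ≤ p := by omega
  have hcz : ((c : ℕ) : ZMod p) = s ∨ ((c : ℕ) : ZMod p) = -s := by
    rcases Nat.le_total s.val (p - s.val) with h | h
    · left
      have : c = s.val := by omega
      rw [this, ZMod.natCast_val, ZMod.cast_id]
    · right
      have hcp : c = p - s.val := by omega
      rw [hcp]
      have : ((p - s.val : ℕ) : ZMod p) = (p : ZMod p) - (s.val : ZMod p) := by
        rw [Nat.cast_sub (by omega)]
      rw [this, ZMod.natCast_self, ZMod.natCast_val, ZMod.cast_id]
      ring
  have hcsq : ((c ^ 2 + 3 : ℕ) : ZMod p) = 0 := by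
    push_cast
    rcases hcz with h | h <;> rw [h] <;> linear_combination -hs
  have hpdvd : p ∣ c ^ 2 + 3 := (ZMod.natCast_eq_zero_iff _ p).mp hcsq
  obtain ⟨k, hk⟩ := hpdvd
  have hk0 : 0 < k := by
    rcases Nat.eq_zero_or_pos k with h | h
    · rw [h, Nat.mul_zero] at hk; omega
    · exact h
  have hkp : k < p := by
    have hb : 4 * c ^ 2 ≤ (p - 1) * (p - 1) := by
      have : 2 * c ≤ p - 1 := by omega
      calc 4 * c ^ 2 = (2 * c) * (2 * c) := by ring
      _ ≤ (p - 1) * (p - 1) := Nat.mul_le_mul this this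
    nlinarith [hp7]
  have hrep : ∃ a b : ℤ, ((k * p : ℕ) : ℤ) = a ^ 2 + 3 * b ^ 2 := by
    refine ⟨(c : ℤ), 1, ?_⟩
    push_cast
    have : (c : ℤ) ^ 2 + 3 = (p : ℤ) * k := by exact_mod_cast congrArg (Nat.cast : ℕ → ℤ) hk
    linarith
  obtain ⟨a, b, hab⟩ := st13_descent hp hodd k hk0 hkp hrep
  exact ⟨a - b, 2 * b, by rw [hab]; ring⟩

lemma st13_assembly :
    ∀ n : ℕ, (∀ q : ℕ, q.Prime → q % 3 = 2 → Even (padicValNat q n)) →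
      ∃ a b : ℤ, (n : ℤ) = a ^ 2 + a * b + b ^ 2 := by
  intro n
  induction n using Nat.strong_induction_on with
  | _ n ih =>
    intro H
    rcases Nat.eq_zero_or_pos n with rfl | hn0
    · exact ⟨0, 0, by norm_num⟩
    rcases eq_or_lt_of_le (show 1 ≤ n from hn0) with h1 | hn1
    · exact ⟨1, 0, by rw [← h1]; norm_num⟩
    have hne1 : n ≠ 1 := by omega
    set p := n.minFac with hpdef
    have hp : p.Prime := Nat.minFac_prime hne1
    haveI : Fact p.Prime := ⟨hp⟩
    have hdvd : p ∣ n := Nat.minFac_dvd n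
    have hval : ∀ q : ℕ, q.Prime → q ≠ p → ∀ m : ℕ, m ≠ 0 → n = p * m →
        padicValNat q m = padicValNat q n := by
      intro q hq hqp m hm hnm
      haveI : Fact q.Prime := ⟨hq⟩
      have hq0 : padicValNat q p = 0 := padicValNat.eq_zero_of_not_dvd (by
        intro hqd
        exact hqp ((Nat.prime_dvd_prime_iff_eq hq hp).mp hqd))
      rw [hnm, padicValNat.mul (hp.pos.ne') hm, hq0, zero_add]
    have hm3 : p % 3 = 0 ∨ p % 3 = 1 ∨ p % 3 = 2 := by omega
    rcases hm3 with h0 | h1' | h2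
    · -- p % 3 = 0, so p = 3
      have hp3 : p = 3 := ((Nat.prime_dvd_prime_iff_eq Nat.prime_three hp).mp
        (Nat.dvd_of_mod_eq_zero h0)).symm
      obtain ⟨m, hm⟩ := hdvd
      have hm0 : m ≠ 0 := by rintro rfl; omega
      have hmlt : m < n := by
        rw [hm]; have := hp.two_le; calc m = 1 * m := (one_mul m).symm
        _ < p * m := by exact Nat.mul_lt_mul_of_lt_of_le (by omega) le_rfl (by omega)
      obtain ⟨c, d, hcd⟩ := ih m hmlt (by
        intro q hq hq2
        rw [hval q hq (by omega) m hm0 hm]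
        exact H q hq hq2)
      refine ⟨1 * c - 1 * d, 1 * d + 1 * c + 1 * d, ?_⟩
      have : (n : ℤ) = 3 * (m : ℤ) := by rw [hm, hp3]; push_cast; ring
      rw [this, hcd]
      have comp : ∀ a b c d : ℤ, (a ^ 2 + a * b + b ^ 2) * (c ^ 2 + c * d + d ^ 2) =
          (a * c - b * d) ^ 2 + (a * c - b * d) * (a * d + b * c + b * d) +
            (a * d + b * c + b * d) ^ 2 := by intros; ring
      have := comp 1 1 c d
      norm_num at this ⊢
      linarith [this]
    · -- p % 3 = 1
      obtain ⟨a, b, hab⟩ := st13_fermat hp h1'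
      obtain ⟨m, hm⟩ := hdvd
      have hm0 : m ≠ 0 := by rintro rfl; omega
      have hmlt : m < n := by
        rw [hm]; have := hp.two_le; calc m = 1 * m := (one_mul m).symm
        _ < p * m := by exact Nat.mul_lt_mul_of_lt_of_le (by omega) le_rfl (by omega)
      obtain ⟨c, d, hcd⟩ := ih m hmlt (by
        intro q hq hq2
        rw [hval q hq (by omega) m hm0 hm]
        exact H q hq hq2)
      refine ⟨a * c - b * d, a * d + b * c + b * d, ?_⟩
      have hn : (n : ℤ) = (p : ℤ) * (m : ℤ) := by rw [hm]; push_cast; ring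
      rw [hn, hab, hcd]; ring
    · -- p % 3 = 2
      have hv1 : 1 ≤ padicValNat p n := one_le_padicValNat_of_dvd hn0.ne' hdvd
      have hve : Even (padicValNat p n) := H p hp h2
      have hv2 : 2 ≤ padicValNat p n := by
        obtain ⟨w, hw⟩ := hve; omega
      have hp2dvd : p ^ 2 ∣ n := dvd_trans (pow_dvd_pow p hv2) pow_padicValNat_dvd
      obtain ⟨m, hm⟩ := hp2dvd
      have hm0 : m ≠ 0 := by rintro rfl; omega
      have hmlt : m < n := by
        rw [hm]; have := hp.two_le
        calc m = 1 * m := (one_mul m).symm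
        _ < p ^ 2 * m := by
          exact Nat.mul_lt_mul_of_lt_of_le (by nlinarith) le_rfl (by omega)
      obtain ⟨c, d, hcd⟩ := ih m hmlt (by
        intro q hq hq2
        by_cases hqp : q = p
        · subst hqp
          have hsplit : padicValNat p n = 2 + padicValNat p m := by
            rw [hm, padicValNat.mul (pow_pos hp.pos 2).ne' hm0, padicValNat.prime_pow]
          have hEn := H p hp h2
          rw [hsplit] at hEn
          obtain ⟨w, hw⟩ := hEn
          exact ⟨w - 1, by omega⟩
        · haveI : Fact q.Prime := ⟨hq⟩
          have hq0 : padicValNat q (p ^ 2) = 0 := padicValNat.eq_zero_of_not_dvd (by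
            intro hqd
            exact hqp ((Nat.prime_dvd_prime_iff_eq hq hp).mp (hq.dvd_of_dvd_pow hqd)))
          have : padicValNat q n = padicValNat q m := by
            rw [hm, padicValNat.mul (pow_pos hp.pos 2).ne' hm0, hq0, zero_add]
          rw [← this]
          exact H q hq hq2)
      refine ⟨(p : ℤ) * c, (p : ℤ) * d, ?_⟩
      have hn : (n : ℤ) = (p : ℤ) ^ 2 * (m : ℤ) := by rw [hm]; push_cast; ring
      rw [hn, hcd]; ring
theorem stmt_13 (t : ℤ) (h : ∃ x y : ℤ, t = 3 * x ^ 2 - y ^ 2) :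
    (∃ u v : ℤ, t = u ^ 2 + v ^ 2) ↔
    (∃ m n : ℤ, t = 2 * (m ^ 2 - m * n + n ^ 2)) := by
  obtain ⟨x, y, hxy⟩ := h
  constructor
  · -- forward: sum of two squares → 2·(Loeschian)
    rintro ⟨u, v, huv⟩
    rcases eq_or_ne t 0 with rfl | ht0
    · exact ⟨0, 0, by ring⟩
    have htnn : 0 ≤ t := by rw [huv]; positivity
    set N := t.toNat with hNdef
    have hN : (N : ℤ) = t := Int.toNat_of_nonneg htnn
    have hNne : N ≠ 0 := by
      intro hh; rw [hh] at hN; exact ht0 (by exact_mod_cast hN.symm)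
    have RQ : (N : ℤ) = u ^ 2 + v ^ 2 := by rw [hN, huv]
    have RF : (N : ℤ) = 3 * x ^ 2 - y ^ 2 := by rw [hN, hxy]
    have hodd2 : Odd (padicValNat 2 N) :=
      st13_odd_val2 N hNne ⟨u, v, RQ⟩ ⟨x, y, RF⟩
    haveI : Fact (Nat.Prime 2) := ⟨Nat.prime_two⟩
    have h2N : 2 ∣ N := dvd_of_one_le_padicValNat (by
      obtain ⟨w, hw⟩ := hodd2; omega)
    obtain ⟨L, hL⟩ := h2N
    have hLne : L ≠ 0 := by rintro rfl; simp at hL; exact hNne hL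
    have hsq2 : ∃ a b : ℕ, N = a ^ 2 + b ^ 2 := by
      refine ⟨u.natAbs, v.natAbs, ?_⟩
      have : ((u.natAbs ^ 2 + v.natAbs ^ 2 : ℕ) : ℤ) = u ^ 2 + v ^ 2 := by
        push_cast [Int.natCast_natAbs]
        rw [sq_abs, sq_abs]
      exact_mod_cast RQ.trans this.symm
    have HL : ∀ q : ℕ, q.Prime → q % 3 = 2 → Even (padicValNat q L) := by
      intro q hq hq3
      haveI : Fact q.Prime := ⟨hq⟩
      by_cases hq2 : q = 2
      · subst hq2
        have hsplit : padicValNat 2 N = 1 + padicValNat 2 L := by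
          rw [hL, padicValNat.mul (by norm_num) hLne, padicValNat.self (by norm_num)]
        rw [hsplit] at hodd2
        obtain ⟨w, hw⟩ := hodd2
        exact ⟨w, by omega⟩
      · have hqodd : q % 2 = 1 := by
          rcases hq.eq_two_or_odd with h | h
          · exact absurd h hq2
          · exact h
        have hq20 : padicValNat q 2 = 0 := padicValNat.eq_zero_of_not_dvd (by
          intro hdd
          exact hq2 ((Nat.prime_dvd_prime_iff_eq hq Nat.prime_two).mp hdd))
        have hsplit : padicValNat q N = padicValNat q L := by
          rw [hL, padicValNat.mul (by norm_num) hLne, hq20, zero_add]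
        rw [← hsplit]
        have hq4 : q % 4 = 1 ∨ q % 4 = 3 := by omega
        rcases hq4 with h4 | h4
        · -- q ≡ 5 mod 12 : use the form 3x² - y²
          have h12 : q % 12 = 5 := by omega
          exact st13_even_val hq _ (st13_stepA hq (st13_not_isSquare_3_of_5 hq h12))
            N hNne ⟨x, y, RF⟩
        · -- q ≡ 3 mod 4 : use sum of two squares
          by_cases hqN : q ∣ N
          · exact Nat.eq_sq_add_sq_iff.mp hsq2 q (Nat.mem_primeFactors.mpr ⟨hq, hqN, hNne⟩) h4
          · rw [padicValNat.eq_zero_of_not_dvd hqN]; exact Even.zero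
    obtain ⟨a, b, hab⟩ := st13_assembly L HL
    refine ⟨a, -b, ?_⟩
    have : (N : ℤ) = 2 * (L : ℤ) := by rw [hL]; push_cast; ring
    rw [← hN, this, hab]; ring
  · -- backward: 2·(Loeschian) → sum of two squares
    rintro ⟨m, n', hmn⟩
    rcases eq_or_ne t 0 with rfl | ht0
    · exact ⟨0, 0, by ring⟩
    have htnn : 0 ≤ t := by
      rw [hmn]
      nlinarith [sq_nonneg (2 * m - n'), sq_nonneg n']
    set N := t.toNat with hNdef
    have hN : (N : ℤ) = t := Int.toNat_of_nonneg htnn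
    have hNne : N ≠ 0 := by
      intro hh; rw [hh] at hN; exact ht0 (by exact_mod_cast hN.symm)
    have RF : (N : ℤ) = 3 * x ^ 2 - y ^ 2 := by rw [hN, hxy]
    have RL : (N : ℤ) = 2 * (m ^ 2 + m * (-n') + (-n') ^ 2) := by
      rw [hN, hmn]; ring
    have HN : ∀ q : ℕ, q.Prime → q % 4 = 3 → Even (padicValNat q N) := by
      intro q hq hq4
      haveI : Fact q.Prime := ⟨hq⟩
      have hq3 : q % 3 = 0 ∨ q % 3 = 1 ∨ q % 3 = 2 := by omega
      rcases hq3 with h3 | h3 | h3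
      · -- q = 3
        have hq3' : q = 3 := ((Nat.prime_dvd_prime_iff_eq Nat.prime_three hq).mp
          (Nat.dvd_of_mod_eq_zero h3)).symm
        subst hq3'
        exact st13_even_val Nat.prime_three _ st13_step3 N hNne
          ⟨⟨x, y, RF⟩, ⟨m, -n', RL⟩⟩
      · -- q ≡ 7 mod 12 : use the form 3x² - y²
        have h12 : q % 12 = 7 := by omega
        exact st13_even_val hq _ (st13_stepA hq (st13_not_isSquare_3_of_7 hq h12))
          N hNne ⟨x, y, RF⟩
      · -- q ≡ 11 mod 12 : use the Loeschian form
        have hqodd : q ≠ 2 := by omega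
        have hnsq := st13_not_isSquare_neg3 hq hqodd h3
        have h2N : 2 ∣ N := by
          have : ((2 : ℕ) : ℤ) ∣ (N : ℤ) := ⟨_, RL⟩
          exact_mod_cast this
        obtain ⟨L, hL⟩ := h2N
        have hLne : L ≠ 0 := by rintro rfl; simp at hL; exact hNne hL
        have hLrep : (L : ℤ) = m ^ 2 + m * (-n') + (-n') ^ 2 := by
          have hNL : (N : ℤ) = 2 * (L : ℤ) := by rw [hL]; push_cast; ring
          have := hNL.symm.trans RL
          linarith
        have hevL : Even (padicValNat q L) :=
          st13_even_val hq _ (st13_stepB hq hnsq) L hLne ⟨m, -n', hLrep⟩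
        have hq20 : padicValNat q 2 = 0 := padicValNat.eq_zero_of_not_dvd (by
          intro hdd
          exact hqodd ((Nat.prime_dvd_prime_iff_eq hq Nat.prime_two).mp hdd))
        rw [hL, padicValNat.mul (by norm_num) hLne, hq20, zero_add]
        exact hevL
    obtain ⟨A, B, hAB⟩ := Nat.eq_sq_add_sq_iff.mpr (fun q hq h4 => HN q (Nat.prime_of_mem_primeFactors hq) h4)
    refine ⟨(A : ℤ), (B : ℤ), ?_⟩
    rw [← hN]
    exact_mod_cast hAB
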